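/- Let B be a Banach A-bimodule and let n ≥ 2 be an even integer. If e^(n) ∈ A^(n) is a left unit A^(n)-module for B^(n) (i.e., e^(n)b^(n) = b^(n) for all b^(n) ∈ B^(n)) and e^(n) belongs to the left weak topological center Z̃ℓ_{B^(n)}(A^(n)) = {a^(n) ∈ A^(n) : b^(n) ↦ a^(n)b^(n) is weak*-to-weak continuous from B^(n) to B^(n)}, then B is a reflexive Banach space. -/

import Mathlib

open NormedSpace Filter Topology

noncomputable section

universe u

/-- The Arens adjoint of a bounded bilinear map `m : X × Y → Z`:
`⟨adjB m z' x, y⟩ = ⟨z', m x y⟩`.  Its triple iterate `adjB (adjB (adjB m))` is the Arens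
(triple adjoint) extension `m*** : X** × Y** → Z**`. -/
def adjB {X Y Z : Type*} [NormedAddCommGroup X] [NormedSpace ℂ X]
    [NormedAddCommGroup Y] [NormedSpace ℂ Y] [NormedAddCommGroup Z] [NormedSpace ℂ Z]
    (m : X →L[ℂ] Y →L[ℂ] Z) : StrongDual ℂ Z →L[ℂ] X →L[ℂ] StrongDual ℂ Y :=
  ((ContinuousLinearMap.compL ℂ X (Y →L[ℂ] Z) (Y →L[ℂ] ℂ)).flip m).comp
    (ContinuousLinearMap.compL ℂ Y Z ℂ)

/-- A pair consisting of a Banach algebra (carrier `X`, multiplication `mul`) and a Banach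
`X`-bimodule (carrier `Y`, left action `pl`, right action `pr`), recorded through its bounded
(bi)linear structure maps. -/
structure APair : Type (u + 1) where
  X : Type u
  Y : Type u
  [nX : NormedAddCommGroup X]
  [mX : NormedSpace ℂ X]
  [nY : NormedAddCommGroup Y]
  [mY : NormedSpace ℂ Y]
  mul : X →L[ℂ] X →L[ℂ] X
  pl : X →L[ℂ] Y →L[ℂ] Y
  pr : Y →L[ℂ] X →L[ℂ] Y

attribute [instance] APair.nX APair.mX APair.nY APair.mY

/-- Passage to biduals: `X ↦ X**`, `Y ↦ Y**`, with the first Arens product on `X**` and the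
Arens triple-adjoint extensions of the module actions. -/
def APair.bidual (P : APair) : APair where
  X := StrongDual ℂ (StrongDual ℂ P.X)
  Y := StrongDual ℂ (StrongDual ℂ P.Y)
  mul := adjB (adjB (adjB P.mul))
  pl := adjB (adjB (adjB P.pl))
  pr := adjB (adjB (adjB P.pr))

/-- `P.iter k` is the `2k`-th dual level of the pair `P`: the Banach algebra `A^(2k)` acting on
the Banach bimodule `B^(2k)`. -/
def APair.iter (P : APair) : ℕ → APair
  | 0 => P
  | k + 1 => (P.iter k).bidual

variable (A B : Type u) [NonUnitalNormedRing A] [NormedSpace ℂ A]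
  [SMulCommClass ℂ A A] [IsScalarTower ℂ A A] [CompleteSpace A]
  [NormedAddCommGroup B] [NormedSpace ℂ B] [CompleteSpace B]

variable (πl : A →L[ℂ] B →L[ℂ] B) (πr : B →L[ℂ] A →L[ℂ] B)

/-- The base pair: the Banach algebra `A` together with the Banach `A`-bimodule `B`. -/
def basePair : APair where
  X := A
  Y := B
  mul := ContinuousLinearMap.mul ℂ A
  pl := πl
  pr := πr


/-- A weak-star continuous linear functional on `Dual ℂ W` is an evaluation at a point of `W`. -/
lemma eval_of_weakStar_continuous {W : Type u} [NormedAddCommGroup W] [NormedSpace ℂ W]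
    (G : StrongDual ℂ (StrongDual ℂ W)) (hG : Continuous fun ψ : WeakDual ℂ W => G ψ) :
    ∃ w : W, inclusionInDoubleDual ℂ W w = G := by
  have h0 : (fun ψ : WeakDual ℂ W => G ψ) ⁻¹' Metric.ball (0 : ℂ) 1 ∈ 𝓝 (0 : WeakDual ℂ W) := by
    refine hG.continuousAt.preimage_mem_nhds ?_
    have : G (0 : StrongDual ℂ W) = 0 := map_zero G
    rw [show G ((0 : WeakDual ℂ W) : StrongDual ℂ W) = 0 from this]
    exact Metric.ball_mem_nhds (0 : ℂ) one_pos
  obtain ⟨U, hU, hUsub⟩ := (LinearMap.hasBasis_weakBilin (topDualPairing ℂ W)).mem_iff.mp h0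
  obtain ⟨s, r, hr, rfl⟩ := (SeminormFamily.basisSets_iff _).mp hU
  -- if ψ vanishes on s, then G ψ = 0
  have key : ∀ ψ : StrongDual ℂ W, (∀ w ∈ s, ψ w = 0) → G ψ = 0 := by
    intro ψ hψ
    by_contra hne
    have hpos : 0 < ‖G ψ‖ := norm_pos_iff.mpr hne
    set t : ℂ := ((‖G ψ‖⁻¹ * 2 : ℝ) : ℂ) with ht
    have hmem : (t • ψ) ∈ (s.sup (LinearMap.toSeminormFamily (topDualPairing ℂ W))).ball 0 r := by
      rw [Seminorm.mem_ball_zero]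
      refine Seminorm.finset_sup_apply_lt hr fun w hw => ?_
      have : (LinearMap.toSeminormFamily (topDualPairing ℂ W) w) (t • ψ) = 0 := by
        rw [LinearMap.toSeminormFamily_apply]
        simp only [map_smul, LinearMap.smul_apply, topDualPairing_apply, hψ w hw, smul_zero,
          norm_zero]
      rw [this]; exact hr
    have hlt : ‖G (t • ψ)‖ < 1 := by
      have := hUsub hmem
      exact mem_ball_zero_iff.mp this
    rw [map_smul, norm_smul] at hlt
    have htn : ‖t‖ = ‖G ψ‖⁻¹ * 2 := by
      rw [ht, Complex.norm_real, Real.norm_eq_abs, abs_of_pos (by positivity)]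
    rw [htn] at hlt
    have : ‖G ψ‖⁻¹ * 2 * ‖G ψ‖ = 2 := by
      rw [mul_comm (‖G ψ‖⁻¹) 2, mul_assoc, inv_mul_cancel₀ hpos.ne', mul_one]
    rw [this] at hlt
    linarith
  -- linear algebra: G is in the span of evaluations
  let L : {w // w ∈ s} → (StrongDual ℂ W →ₗ[ℂ] ℂ) := fun w =>
    (inclusionInDoubleDual ℂ W w.1 : StrongDual ℂ W →L[ℂ] ℂ)
  have hker : ⨅ i, LinearMap.ker (L i) ≤ LinearMap.ker (G : StrongDual ℂ W →ₗ[ℂ] ℂ) := by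
    intro ψ hψ
    rw [LinearMap.mem_ker]
    refine key ψ fun w hw => ?_
    have := (Submodule.mem_iInf _).mp hψ ⟨w, hw⟩
    rw [LinearMap.mem_ker] at this
    exact this
  have hspan := mem_span_of_iInf_ker_le_ker (L := L) (K := (G : StrongDual ℂ W →ₗ[ℂ] ℂ)) hker
  let J : W →ₗ[ℂ] (StrongDual ℂ W →ₗ[ℂ] ℂ) :=
    (ContinuousLinearMap.coeLM ℂ).comp (inclusionInDoubleDual ℂ W).toLinearMap
  have hle : Submodule.span ℂ (Set.range L) ≤ LinearMap.range J :=
    Submodule.span_le.mpr (by rintro _ ⟨i, rfl⟩; exact ⟨i.1, rfl⟩)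
  obtain ⟨w, hw⟩ := hle hspan
  exact ⟨w, ContinuousLinearMap.ext fun ψ => LinearMap.congr_fun hw ψ⟩

/-- If the dual of a Banach space `W` is reflexive, then so is `W`. -/
lemma descend {W : Type u} [NormedAddCommGroup W] [NormedSpace ℂ W] [CompleteSpace W]
    (h : Function.Surjective (inclusionInDoubleDual ℂ (StrongDual ℂ W))) :
    Function.Surjective (inclusionInDoubleDual ℂ W) := by
  intro Φ
  by_contra hΦ
  push_neg at hΦ
  set S : Submodule ℂ (StrongDual ℂ (StrongDual ℂ W)) := LinearMap.range (inclusionInDoubleDual ℂ W : W →ₗ[ℂ] StrongDual ℂ (StrongDual ℂ W)) with hS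
  have hΦS : Φ ∉ S := by
    rintro ⟨w, hw⟩
    exact hΦ w hw
  have hclosed : IsClosed (S : Set (StrongDual ℂ (StrongDual ℂ W))) := by
    have hrange : Set.range (inclusionInDoubleDualLi ℂ (E := W)) = (S : Set (StrongDual ℂ (StrongDual ℂ W))) :=
      rfl
    have h1 : IsComplete (Set.range (inclusionInDoubleDualLi ℂ (E := W))) :=
      (inclusionInDoubleDualLi ℂ (E := W)).isometry.isUniformInducing.isComplete_range
    have h2 := h1.isClosed
    rwa [hrange] at h2
  haveI : IsClosed (S : Set (StrongDual ℂ (StrongDual ℂ W))) := hclosed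
  letI : NormedAddCommGroup (StrongDual ℂ (StrongDual ℂ W)) := inferInstance
  have hmkne : (Submodule.Quotient.mk Φ : StrongDual ℂ (StrongDual ℂ W) ⧸ S) ≠ 0 := by
    simpa [Submodule.Quotient.mk_eq_zero] using hΦS
  obtain ⟨g₀, -, hg₀⟩ := exists_dual_vector ℂ (Submodule.Quotient.mk Φ : StrongDual ℂ (StrongDual ℂ W) ⧸ S)
    (norm_ne_zero_iff.mpr hmkne)
  let mkc : StrongDual ℂ (StrongDual ℂ W) →L[ℂ] (StrongDual ℂ (StrongDual ℂ W) ⧸ S) :=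
    LinearMap.mkContinuous S.mkQ 1 (fun x => by simpa using Submodule.Quotient.norm_mk_le S x)
  obtain ⟨f, hf⟩ := h (g₀.comp mkc)
  have hf0 : f = 0 := by
    ext w
    have h1 : (g₀.comp mkc) (inclusionInDoubleDual ℂ W w) = 0 := by
      have hz : mkc (inclusionInDoubleDual ℂ W w) = 0 :=
        (Submodule.Quotient.mk_eq_zero S).mpr ⟨w, rfl⟩
      simp [ContinuousLinearMap.comp_apply, hz]
    have h2 : (g₀.comp mkc) (inclusionInDoubleDual ℂ W w) = f w := by
      rw [← hf]; rfl
    rw [h2] at h1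
    simpa using h1
  have hg0 : g₀ (Submodule.Quotient.mk Φ) = 0 := by
    have : (g₀.comp mkc) Φ = 0 := by rw [← hf, hf0]; simp
    exact this
  rw [hg₀] at hg0
  exact hmkne (norm_eq_zero.mp (Complex.ofReal_eq_zero.mp hg0))


lemma iterY_complete (k : ℕ) : CompleteSpace ((basePair A B πl πr).iter k).Y := by
  cases k with
  | zero => exact ‹CompleteSpace B›
  | succ k =>
      exact inferInstanceAs (CompleteSpace (StrongDual ℂ (StrongDual ℂ ((basePair A B πl πr).iter k).Y)))

lemma iter_descend :
    ∀ k : ℕ, Function.Surjective (inclusionInDoubleDual ℂ ((basePair A B πl πr).iter k).Y) →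
      Function.Surjective (inclusionInDoubleDual ℂ B)
  | 0, h => h
  | k + 1, h => by
      haveI := iterY_complete A B πl πr k
      have h' : Function.Surjective
          (inclusionInDoubleDual ℂ (StrongDual ℂ (StrongDual ℂ ((basePair A B πl πr).iter k).Y))) := h
      exact iter_descend k (descend (descend h'))

/-- with `n = 2*(j+1) ≥ 2` even: if `e^(n) ∈ A^(n)` is a left unit
`A^(n)`-module for `B^(n)` (`e^(n)b^(n) = b^(n)` for all `b^(n)`) and `e^(n)` belongs to
`Z̃ℓ_{B^(n)}(A^(n))` (the map `b^(n) ↦ e^(n)b^(n)` is weak*-to-weak continuous from `B^(n)` to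
`B^(n)`), then `B` is reflexive.  Here `Q` is level `n-2`, `A^(n) = (Q.X)**`,
`B^(n) = (Q.Y)**`, and the left action of `A^(n)` on `B^(n)` is `adjB³ Q.pl`. -/
theorem stmt13
    (hℓ : ∀ (a b : A) (x : B), πl (a * b) x = πl a (πl b x))
    (hr : ∀ (x : B) (a b : A), πr (πr x a) b = πr x (a * b))
    (hm : ∀ (a : A) (x : B) (b : A), πr (πl a x) b = πl a (πr x b))
    (j : ℕ)
    (e : StrongDual ℂ (StrongDual ℂ ((basePair A B πl πr).iter j).X))
    (hunit : ∀ b2 : StrongDual ℂ (StrongDual ℂ ((basePair A B πl πr).iter j).Y),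
      adjB (adjB (adjB ((basePair A B πl πr).iter j).pl)) e b2 = b2)
    (hz : Continuous fun b2 : WeakDual ℂ (StrongDual ℂ ((basePair A B πl πr).iter j).Y) =>
      (adjB (adjB (adjB ((basePair A B πl πr).iter j).pl)) e b2 :
        WeakSpace ℂ (StrongDual ℂ (StrongDual ℂ ((basePair A B πl πr).iter j).Y)))) :
    Function.Surjective (inclusionInDoubleDual ℂ B) := by
  have hsurj : Function.Surjective
      (inclusionInDoubleDual ℂ (StrongDual ℂ ((basePair A B πl πr).iter j).Y)) := by
    intro G
    refine eval_of_weakStar_continuous G ?_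
    exact (G.continuous.comp hz).congr fun b2 => congrArg G (hunit b2)
  haveI := iterY_complete A B πl πr j
  exact iter_descend A B πl πr j (descend hsurj)


end
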